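/- Under the internal hom differential, the Laplacian construction is natural in the pairing: ∂Δ_τ = Δ_{∂τ}, where ∂τ is the differential of the pairing τ in the internal hom complex [V⊗V, K]. -/

import Mathlib

/-!
STATEMENT 6: Under the internal hom differential, the Laplacian construction is
natural in the pairing: `∂Δ_τ = Δ_{∂τ}`, where `∂τ` is the differential of the
pairing `τ` in the internal hom complex `[V ⊗ V, K]`.

`Sym V` is modeled as an abstract graded-commutative algebra `A` generated by a
graded space of generators, equipped with the differential `Q` (the symmetric
algebra extension of the differential of `V`).  Since `Δ_τ` has degree `p`, the
internal hom differential is `∂Δ_τ = Q ∘ Δ_τ − (−1)^p Δ_τ ∘ Q`, and since the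
differential of `K` is trivial,
`(∂τ)(a ⊗ b) = −(−1)^p (τ(Qa ⊗ b) + (−1)^{|a|} τ(a ⊗ Qb))`.
The conclusion states that `∂Δ_τ` equals the Laplacian associated with `∂τ`.
-/

/-- Koszul sign `(−1)ⁿ`. -/
def gsgn (K : Type*) [Field K] (n : ℤ) : K := if Even n then 1 else -1

/-- A model of the graded symmetric algebra `Sym V` of a graded vector space `V`:
a ℤ-graded, graded-commutative algebra generated by a graded space of
generators. -/
structure GSA (K : Type*) [Field K] (A : Type*) [AddCommGroup A] [Module K A] where
  grade : ℤ → Submodule K A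
  one : A
  mul : A →ₗ[K] A →ₗ[K] A
  one_mem : one ∈ grade 0
  mul_mem : ∀ {i j : ℤ} {a b : A}, a ∈ grade i → b ∈ grade j → mul a b ∈ grade (i + j)
  one_mul : ∀ a, mul one a = a
  mul_one : ∀ a, mul a one = a
  mul_assoc : ∀ a b c, mul (mul a b) c = mul a (mul b c)
  mul_comm : ∀ {i j : ℤ} {a b : A}, a ∈ grade i → b ∈ grade j →
    mul a b = gsgn K (i * j) • mul b a
  /-- the generators (the image of `V` in `Sym V`) -/
  gen : ℤ → Submodule K A
  gen_le : ∀ i, gen i ≤ grade i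

namespace GSA

variable {K : Type*} [Field K] {A : Type*} [AddCommGroup A] [Module K A]

/-- monomials in the generators -/
inductive IsMon (S : GSA K A) : A → Prop
  | one : IsMon S S.one
  | gen {i : ℤ} {v : A} : v ∈ S.gen i → IsMon S v
  | mul {a b : A} : IsMon S a → IsMon S b → IsMon S (S.mul a b)

/-- `A` is spanned by monomials in the generators (as is the case for `Sym V`). -/
def Generates (S : GSA K A) : Prop :=
  ∀ a : A, a ∈ Submodule.span K {x | S.IsMon x}

/-- a symmetric pairing `τ ∈ [V ⊗ V, K]^p` of degree `p`, extended by zero to `A` -/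
structure IsSymPairing (S : GSA K A) (p : ℤ) (τ : A →ₗ[K] A →ₗ[K] K) : Prop where
  symm : ∀ {i j : ℤ} {a b : A}, a ∈ S.grade i → b ∈ S.grade j →
    τ a b = gsgn K (i * j) * τ b a
  deg : ∀ {i j : ℤ} {a b : A}, a ∈ S.grade i → b ∈ S.grade j →
    i + j + p ≠ 0 → τ a b = 0

/-- the bracket `μ⟨a,b⟩_τ` measuring the failure of `D = Δ_τ` (of degree `p`)
to be a signed derivation; `i` is the degree of `a`. -/
def br (S : GSA K A) (D : A →ₗ[K] A) (p i : ℤ) (a b : A) : A :=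
  D (S.mul a b) - S.mul (D a) b - gsgn K (p * i) • S.mul a (D b)

/-- the defining properties of the Laplacian `Δ_τ` of a symmetric degree-`p`
pairing `τ` (Definition 2.5 of the paper, with the bi-derivation property of
`⟨−,−⟩_τ` of Definition 2.3 expressed through the bracket `br`). -/
structure IsLaplacian (S : GSA K A) (p : ℤ) (τ : A →ₗ[K] A →ₗ[K] K)
    (D : A →ₗ[K] A) : Prop where
  deg : ∀ {i : ℤ} {a : A}, a ∈ S.grade i → D a ∈ S.grade (i + p)
  map_one : D S.one = 0
  map_gen : ∀ {i : ℤ} {v : A}, v ∈ S.gen i → D v = 0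
  map_pair : ∀ {i j : ℤ} {v w : A}, v ∈ S.gen i → w ∈ S.gen j →
    D (S.mul v w) = τ v w • S.one
  br_der : ∀ {i j k : ℤ} {a b c : A}, a ∈ S.grade i → b ∈ S.grade j → c ∈ S.grade k →
    S.br D p i a (S.mul b c) =
      S.mul (S.br D p i a b) c + gsgn K ((i + p) * j) • S.mul b (S.br D p i a c)

end GSA

/-- the symmetric algebra differential: degree `1`, square-zero, signed
derivation, preserving generators -/
structure IsDiff {K : Type*} [Field K] {A : Type*} [AddCommGroup A] [Module K A]
    (S : GSA K A) (Q : A →ₗ[K] A) : Prop where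
  deg : ∀ {i : ℤ} {a : A}, a ∈ S.grade i → Q a ∈ S.grade (i + 1)
  sq : Q ∘ₗ Q = 0
  map_one : Q S.one = 0
  map_gen : ∀ {i : ℤ} {v : A}, v ∈ S.gen i → Q v ∈ S.gen (i + 1)
  leibniz : ∀ {i : ℤ} {a : A} (b : A), a ∈ S.grade i →
    Q (S.mul a b) = S.mul (Q a) b + gsgn K i • S.mul a (Q b)

section Aux

variable {K : Type*} [Field K] {A : Type*} [AddCommGroup A] [Module K A]

lemma GSA.grade_cast (S : GSA K A) {m : A} {n n' : ℤ} (h : m ∈ S.grade n) (e : n = n') :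
    m ∈ S.grade n' := e ▸ h

lemma GSA.isMon_grade (S : GSA K A) {m : A} (h : S.IsMon m) : ∃ i, m ∈ S.grade i := by
  induction h with
  | one => exact ⟨0, S.one_mem⟩
  | gen hv => exact ⟨_, S.gen_le _ hv⟩
  | mul _ _ ih1 ih2 =>
    obtain ⟨i, hi⟩ := ih1
    obtain ⟨j, hj⟩ := ih2
    exact ⟨i + j, S.mul_mem hi hj⟩

lemma GSA.br_right (S : GSA K A) (F : A →ₗ[K] A) (q i : ℤ) (a : A) (c : K) (x y : A) :
    S.br F q i a (x + c • y) = S.br F q i a x + c • S.br F q i a y := by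
  simp only [GSA.br, map_add, map_smul]
  module

lemma GSA.br_mem (S : GSA K A) {F : A →ₗ[K] A} {q : ℤ}
    (hdeg : ∀ {i : ℤ} {a : A}, a ∈ S.grade i → F a ∈ S.grade (i + q))
    {i j : ℤ} {a b : A} (ha : a ∈ S.grade i) (hb : b ∈ S.grade j) :
    S.br F q i a b ∈ S.grade (i + j + q) := by
  refine Submodule.sub_mem _ (Submodule.sub_mem _ ?_ ?_) (Submodule.smul_mem _ _ ?_)
  · exact S.grade_cast (hdeg (S.mul_mem ha hb)) rfl
  · exact S.grade_cast (S.mul_mem (hdeg ha) hb) (by ring)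
  · exact S.grade_cast (S.mul_mem ha (hdeg hb)) (by ring)

lemma GSA.br_symm (S : GSA K A) {F : A →ₗ[K] A} {q : ℤ}
    (hdeg : ∀ {i : ℤ} {a : A}, a ∈ S.grade i → F a ∈ S.grade (i + q))
    {i j : ℤ} {a b : A} (ha : a ∈ S.grade i) (hb : b ∈ S.grade j) :
    S.br F q i a b = gsgn K (i * j) • S.br F q j b a := by
  simp only [GSA.br]
  rw [S.mul_comm ha hb, map_smul, S.mul_comm (hdeg ha) hb, S.mul_comm ha (hdeg hb)]
  by_cases hi : Even i <;> by_cases hj : Even j <;> by_cases hq : Even q <;>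
    simp [gsgn, parity_simps, hi, hj, hq] <;> module

end Aux
/-- `∂Δ_τ = Δ_{∂τ}`. -/
theorem partial_laplacian_eq_laplacian_partial
    {K : Type*} [Field K] [CharZero K] {A : Type*} [AddCommGroup A] [Module K A]
    (S : GSA K A) (hgen : S.Generates)
    (Q : A →ₗ[K] A) (hQ : IsDiff S Q)
    (p : ℤ) (τ dτ : A →ₗ[K] A →ₗ[K] K)
    (hτ : S.IsSymPairing p τ)
    -- `dτ` is the internal hom differential `∂τ` of the pairing `τ`
    (hdτ : ∀ {i : ℤ} (a b : A), a ∈ S.grade i →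
      dτ a b = -(gsgn K p) * (τ (Q a) b + gsgn K i * τ a (Q b)))
    (D D' : A →ₗ[K] A)
    (hD : S.IsLaplacian p τ D) (hD' : S.IsLaplacian (p + 1) dτ D') :
    Q ∘ₗ D - gsgn K p • (D ∘ₗ Q) = D' := by
  set E : A →ₗ[K] A := Q ∘ₗ D - gsgn K p • (D ∘ₗ Q) with hEdef
  have hEapp : ∀ a : A, E a = Q (D a) - gsgn K p • D (Q a) := by
    intro a
    rw [hEdef]
    simp [LinearMap.sub_apply, LinearMap.smul_apply, LinearMap.comp_apply]
  have hEdeg : ∀ {i : ℤ} {a : A}, a ∈ S.grade i → E a ∈ S.grade (i + (p + 1)) := by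
    intro i a ha
    rw [hEapp]
    refine Submodule.sub_mem _ ?_ (Submodule.smul_mem _ _ ?_)
    · exact S.grade_cast (hQ.deg (hD.deg ha)) (by ring)
    · exact S.grade_cast (hD.deg (hQ.deg ha)) (by ring)
  have hEone : E S.one = 0 := by
    rw [hEapp, hD.map_one, hQ.map_one, map_zero, map_zero]
    simp
  have hEgen : ∀ {i : ℤ} {v : A}, v ∈ S.gen i → E v = 0 := by
    intro i v hv
    rw [hEapp, hD.map_gen hv, hD.map_gen (hQ.map_gen hv), map_zero]
    simp
  have hEpair : ∀ {i j : ℤ} {v w : A}, v ∈ S.gen i → w ∈ S.gen j →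
      E (S.mul v w) = dτ v w • S.one := by
    intro i j v w hv hw
    have hvg := S.gen_le i hv
    rw [hEapp, hD.map_pair hv hw, map_smul, hQ.map_one, hQ.leibniz w hvg, map_add, map_smul,
      hD.map_pair (hQ.map_gen hv) hw, hD.map_pair hv (hQ.map_gen hw), hdτ v w hvg]
    simp only [smul_zero]
    module
  have hform : ∀ {i : ℤ} (a b : A), a ∈ S.grade i →
      S.br E (p + 1) i a b = Q (S.br D p i a b) - gsgn K p • S.br D p (i + 1) (Q a) b
        - gsgn K (p + i) • S.br D p i a (Q b) := by
    intro i a b ha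
    simp only [GSA.br, hEapp]
    rw [hQ.leibniz b ha]
    simp only [map_add, map_sub, map_smul, LinearMap.add_apply, LinearMap.sub_apply,
      LinearMap.smul_apply, smul_add, smul_sub, smul_smul]
    rw [hQ.leibniz b (hD.deg ha), hQ.leibniz (D b) ha]
    by_cases hp : Even p <;> by_cases hi : Even i <;>
      simp [gsgn, parity_simps, hp, hi, ← Int.not_even_iff_odd] <;> module
  have hEbrder : ∀ {i j k : ℤ} {a b c : A}, a ∈ S.grade i → b ∈ S.grade j → c ∈ S.grade k →
      S.br E (p + 1) i a (S.mul b c) =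
        S.mul (S.br E (p + 1) i a b) c
          + gsgn K ((i + (p + 1)) * j) • S.mul b (S.br E (p + 1) i a c) := by
    intro i j k a b c ha hb hc
    rw [hform a (S.mul b c) ha, hform a b ha, hform a c ha,
      hD.br_der ha hb hc, hD.br_der (hQ.deg ha) hb hc, hQ.leibniz c hb,
      S.br_right D p i a (gsgn K j), hD.br_der ha (hQ.deg hb) hc, hD.br_der ha hb (hQ.deg hc),
      map_add, map_smul (Q), hQ.leibniz c (S.br_mem hD.deg ha hb),
      hQ.leibniz (S.br D p i a c) hb]
    simp only [map_add, map_sub, map_smul, LinearMap.add_apply, LinearMap.sub_apply,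
      LinearMap.smul_apply, smul_add, smul_sub, smul_smul]
    by_cases hp : Even p <;> by_cases hi : Even i <;> by_cases hj : Even j <;>
      simp [gsgn, parity_simps, hp, hi, hj, ← Int.not_even_iff_odd] <;> module
  have C1 : ∀ b : A, S.IsMon b → ∀ (ℓ : ℤ) (w : A), w ∈ S.gen ℓ →
      S.br E (p + 1) ℓ w b = S.br D' (p + 1) ℓ w b := by
    intro b hb
    induction hb with
    | one =>
      intro ℓ w hw
      simp [GSA.br, S.mul_one, hEone, hD'.map_one]
    | @gen j v hv =>
      intro ℓ w hw
      simp only [GSA.br]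
      rw [hEpair hw hv, hD'.map_pair hw hv, hEgen hw, hD'.map_gen hw, hEgen hv, hD'.map_gen hv]
    | @mul b1 b2 hb1 hb2 ih1 ih2 =>
      intro ℓ w hw
      obtain ⟨j1, hbj1⟩ := S.isMon_grade hb1
      obtain ⟨j2, hbj2⟩ := S.isMon_grade hb2
      rw [hEbrder (S.gen_le _ hw) hbj1 hbj2, hD'.br_der (S.gen_le _ hw) hbj1 hbj2,
        ih1 ℓ w hw, ih2 ℓ w hw]
  have C2 : ∀ b : A, S.IsMon b → ∀ (i : ℤ) (a : A), a ∈ S.grade i → S.IsMon a →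
      S.br E (p + 1) i a b = S.br D' (p + 1) i a b := by
    intro b hb
    induction hb with
    | one =>
      intro i a ha hma
      simp [GSA.br, S.mul_one, hEone, hD'.map_one]
    | @gen j v hv =>
      intro i a ha hma
      rw [S.br_symm hEdeg ha (S.gen_le _ hv), S.br_symm hD'.deg ha (S.gen_le _ hv),
        C1 a hma j v hv]
    | @mul b1 b2 hb1 hb2 ih1 ih2 =>
      intro i a ha hma
      obtain ⟨j1, hbj1⟩ := S.isMon_grade hb1
      obtain ⟨j2, hbj2⟩ := S.isMon_grade hb2
      rw [hEbrder ha hbj1 hbj2, hD'.br_der ha hbj1 hbj2, ih1 i a ha hma, ih2 i a ha hma]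
  have C3 : ∀ m : A, S.IsMon m → E m = D' m := by
    intro m hm
    induction hm with
    | one => rw [hEone, hD'.map_one]
    | @gen i v hv => rw [hEgen hv, hD'.map_gen hv]
    | @mul a b hma hmb iha ihb =>
      obtain ⟨i, hi⟩ := S.isMon_grade hma
      have h1 : E (S.mul a b) =
          S.mul (E a) b + gsgn K ((p + 1) * i) • S.mul a (E b) + S.br E (p + 1) i a b := by
        simp only [GSA.br]; abel
      have h2 : D' (S.mul a b) =
          S.mul (D' a) b + gsgn K ((p + 1) * i) • S.mul a (D' b) + S.br D' (p + 1) i a b := by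
        simp only [GSA.br]; abel
      rw [h1, h2, iha, ihb, C2 b hmb i a hi hma]
  apply LinearMap.ext
  intro a
  refine Submodule.span_induction (fun x hx => C3 x hx) (by simp) ?_ ?_ (hgen a)
  · intro x y _ _ hx hy
    simp [map_add, hx, hy]
  · intro c x _ hx
    simp [map_smul, hx]
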